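/- arXiv:1602.08306 — 2 statements merged into one kernel-verified Lean document; each statement's English description precedes it below -/
import Mathlib

section
/- Suppose a : ℝ × V × V → ℂ is a non-autonomous sesquilinear form satisfying |a(t,v,w)| ≤ Λ‖v‖_V‖w‖_V and Re a(t,v,v) ≥ λ‖v‖_V² for all t ∈ ℝ and v,w ∈ V, with λ, Λ > 0. Let θ ∈ ℂ with Re θ > 0 and choose δ = min{λ/(Λ+1), Re θ/(|Im θ|+1)}. Then for all v in the energy space E = H^{1/2}(ℝ; H) ∩ L²(ℝ; V), the form e(v,v) := ∫_ℝ −(D_t^{1/2}v | D_t^{1/2} H_t (1+δH_t)v)_H + ⟨(θ + 𝔄(t))v, (1+δH_t)v⟩ dt satisfies Re e(v,v) ≥ min{λ/(Λ+1), Re θ/(|Im θ|+1)}·‖v‖_E², where ‖v‖_E² = ∫_ℝ ‖v‖_H² + ‖D_t^{1/2}v‖_H² + ‖v‖_V² dt. -/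
open MeasureTheory
open scoped InnerProductSpace

private lemma coeC (r : ℝ) : (RCLike.ofReal r : ℂ) = (r : ℂ) := rfl

private lemma integral_ofReal' (f : ℝ → ℝ) :
    ∫ x : ℝ, ((f x : ℝ) : ℂ) = ((∫ x : ℝ, f x : ℝ) : ℂ) := integral_ofReal

set_option maxHeartbeats 1000000 in
/-- **Hidden coercivity of the parabolic operator.**
Let `a : ℝ × V × V → ℂ` be a non-autonomous form with `|a(t,v,w)| ≤ Λ‖v‖‖w‖` and
`Re a(t,v,v) ≥ λ‖v‖²`, let `Re θ > 0` and `δ = min{λ/(Λ+1), Re θ/(|Im θ|+1)}`.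
For `v` in the energy space `E = H^{1/2}(ℝ;H) ∩ L²(ℝ;V)` write `Dv = D_t^{1/2}v`,
`Hv = H_t v` (Hilbert transform) and `DHv = D_t^{1/2}H_t v`; the relevant multiplier
facts (`H_t` skew-adjoint on `L²(ℝ;H)`, so that `Re∫(D^{1/2}v | D^{1/2}H_t v) = 0` and
`Re∫(v|H_t v)_H = 0`, and `H_t` an isometry, while `D_t^{1/2}H_t(1+δH_t)v = DHv - δ Dv`)
are recorded as hypotheses.  Then the form
`e(v,v) = ∫ -(D^{1/2}v | D^{1/2}H_t(1+δH_t)v)_H + ⟨(θ+𝔄(t))v, (1+δH_t)v⟩ dt`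
satisfies `Re e(v,v) ≥ min{λ/(Λ+1), Re θ/(|Im θ|+1)}·‖v‖_E²`. -/
theorem hidden_coercivity
    {V H : Type*} [NormedAddCommGroup V] [InnerProductSpace ℂ V] [CompleteSpace V]
    [NormedAddCommGroup H] [InnerProductSpace ℂ H] [CompleteSpace H]
    (incl : V →L[ℂ] H)
    (lam Lam : ℝ) (hlam : 0 < lam) (hLam : 0 < Lam)
    (a : ℝ → V → V → ℂ)
    (hbdd : ∀ t v w, ‖a t v w‖ ≤ Lam * ‖v‖ * ‖w‖)
    (hcoer : ∀ t v, lam * ‖v‖ ^ 2 ≤ (a t v v).re)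
    (θ : ℂ) (hθ : 0 < θ.re)
    (δ : ℝ) (hδ : δ = min (lam / (Lam + 1)) (θ.re / (|θ.im| + 1)))
    (v Hv : ℝ → V) (Dv DHv : ℝ → H)
    -- multiplier facts for the Hilbert transform and the half-derivative:
    (hskewD : (∫ t : ℝ, ⟪DHv t, Dv t⟫_ℂ).re = 0)
    (hskewH : (∫ t : ℝ, ⟪incl (Hv t), incl (v t)⟫_ℂ).re = 0)
    (hisoH : ∫ t : ℝ, ‖incl (Hv t)‖ ^ 2 = ∫ t : ℝ, ‖incl (v t)‖ ^ 2)
    (hisoV : ∫ t : ℝ, ‖Hv t‖ ^ 2 = ∫ t : ℝ, ‖v t‖ ^ 2)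
    -- integrability of all the integrands involved:
    (hiDv : Integrable (fun t : ℝ => ‖Dv t‖ ^ 2))
    (hiV : Integrable (fun t : ℝ => ‖v t‖ ^ 2))
    (hiH : Integrable (fun t : ℝ => ‖incl (v t)‖ ^ 2))
    (hiHV : Integrable (fun t : ℝ => ‖Hv t‖ ^ 2))
    (hiDD : Integrable (fun t : ℝ => ⟪DHv t, Dv t⟫_ℂ))
    (hiHH : Integrable (fun t : ℝ => ⟪incl (Hv t), incl (v t)⟫_ℂ))
    (hia : Integrable (fun t : ℝ => a t (v t) (v t)))
    (hiaH : Integrable (fun t : ℝ => a t (v t) (Hv t))) :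
    (∫ t : ℝ,
        (-⟪DHv t - δ • Dv t, Dv t⟫_ℂ
          + θ * ⟪incl (v t) + δ • incl (Hv t), incl (v t)⟫_ℂ
          + (a t (v t) (v t) + (δ : ℂ) * a t (v t) (Hv t)))).re
      ≥ min (lam / (Lam + 1)) (θ.re / (|θ.im| + 1)) *
          ∫ t : ℝ, (‖incl (v t)‖ ^ 2 + ‖Dv t‖ ^ 2 + ‖v t‖ ^ 2) := by
  have hLam1 : (0:ℝ) < Lam + 1 := by linarith
  have him1 : (0:ℝ) < |θ.im| + 1 := by positivity
  have hδ1 : δ ≤ lam / (Lam + 1) := hδ ▸ min_le_left _ _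
  have hδ2 : δ ≤ θ.re / (|θ.im| + 1) := hδ ▸ min_le_right _ _
  have hδpos : 0 < δ := by
    rw [hδ]; exact lt_min (div_pos hlam hLam1) (div_pos hθ him1)
  have hδa : δ * Lam + δ ≤ lam := by
    have := (le_div_iff₀ hLam1).mp hδ1; nlinarith
  have hδb : δ * |θ.im| + δ ≤ θ.re := by
    have := (le_div_iff₀ him1).mp hδ2; nlinarith
  set B : ℂ := ∫ t : ℝ, ⟪incl (Hv t), incl (v t)⟫_ℂ with hB
  have hpt : ∀ t : ℝ,
      (-⟪DHv t - δ • Dv t, Dv t⟫_ℂ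
        + θ * ⟪incl (v t) + δ • incl (Hv t), incl (v t)⟫_ℂ
        + (a t (v t) (v t) + (δ : ℂ) * a t (v t) (Hv t)))
      = -⟪DHv t, Dv t⟫_ℂ + (δ:ℂ) * ((‖Dv t‖^2 : ℝ) : ℂ)
        + θ * ((‖incl (v t)‖^2 : ℝ) : ℂ)
        + (θ * (δ:ℂ)) * ⟪incl (Hv t), incl (v t)⟫_ℂ
        + a t (v t) (v t) + (δ:ℂ) * a t (v t) (Hv t) := by
    intro t
    rw [← Complex.coe_smul δ (Dv t), ← Complex.coe_smul δ (incl (Hv t))]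
    simp only [inner_sub_left, inner_add_left, inner_smul_left, Complex.conj_ofReal,
      inner_self_eq_norm_sq_to_K, coeC]
    push_cast
    ring
  have i1 : Integrable (fun t : ℝ => -⟪DHv t, Dv t⟫_ℂ) := hiDD.neg
  have i2 : Integrable (fun t : ℝ => (δ:ℂ) * ((‖Dv t‖^2 : ℝ):ℂ)) := hiDv.ofReal.const_mul _
  have i3 : Integrable (fun t : ℝ => θ * ((‖incl (v t)‖^2 : ℝ):ℂ)) := hiH.ofReal.const_mul _
  have i4 : Integrable (fun t : ℝ => (θ * (δ:ℂ)) * ⟪incl (Hv t), incl (v t)⟫_ℂ) :=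
    hiHH.const_mul _
  have i6 : Integrable (fun t : ℝ => (δ:ℂ) * a t (v t) (Hv t)) := hiaH.const_mul _
  have I12 : Integrable (fun t : ℝ => -⟪DHv t, Dv t⟫_ℂ + (δ:ℂ) * ((‖Dv t‖^2 : ℝ):ℂ)) :=
    i1.add i2
  have I13 : Integrable (fun t : ℝ => -⟪DHv t, Dv t⟫_ℂ + (δ:ℂ) * ((‖Dv t‖^2 : ℝ):ℂ)
      + θ * ((‖incl (v t)‖^2 : ℝ):ℂ)) := I12.add i3
  have I14 : Integrable (fun t : ℝ => -⟪DHv t, Dv t⟫_ℂ + (δ:ℂ) * ((‖Dv t‖^2 : ℝ):ℂ)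
      + θ * ((‖incl (v t)‖^2 : ℝ):ℂ) + (θ * (δ:ℂ)) * ⟪incl (Hv t), incl (v t)⟫_ℂ) := I13.add i4
  have I15 : Integrable (fun t : ℝ => -⟪DHv t, Dv t⟫_ℂ + (δ:ℂ) * ((‖Dv t‖^2 : ℝ):ℂ)
      + θ * ((‖incl (v t)‖^2 : ℝ):ℂ) + (θ * (δ:ℂ)) * ⟪incl (Hv t), incl (v t)⟫_ℂ
      + a t (v t) (v t)) := I14.add hia
  have key : (∫ t : ℝ,
        (-⟪DHv t - δ • Dv t, Dv t⟫_ℂ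
          + θ * ⟪incl (v t) + δ • incl (Hv t), incl (v t)⟫_ℂ
          + (a t (v t) (v t) + (δ : ℂ) * a t (v t) (Hv t))))
      = -(∫ t : ℝ, ⟪DHv t, Dv t⟫_ℂ) + (δ:ℂ) * ((∫ t : ℝ, ‖Dv t‖^2 : ℝ):ℂ)
        + θ * ((∫ t : ℝ, ‖incl (v t)‖^2 : ℝ):ℂ) + (θ * (δ:ℂ)) * B
        + (∫ t : ℝ, a t (v t) (v t)) + (δ:ℂ) * (∫ t : ℝ, a t (v t) (Hv t)) := by
    rw [integral_congr_ae (Filter.Eventually.of_forall hpt)]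
    rw [integral_add I15 i6, integral_add I14 hia, integral_add I13 i4,
        integral_add I12 i3, integral_add i1 i2,
        integral_neg, integral_const_mul, integral_const_mul, integral_const_mul,
        integral_ofReal', integral_ofReal', integral_const_mul, ← hB]
  rw [key]
  set ID := ∫ t : ℝ, ‖Dv t‖^2 with hID
  set IH := ∫ t : ℝ, ‖incl (v t)‖^2 with hIH
  set IV := ∫ t : ℝ, ‖v t‖^2 with hIV
  have hIDpos : 0 ≤ ID := integral_nonneg fun t => by positivity
  have hIHpos : 0 ≤ IH := integral_nonneg fun t => by positivity
  have hIVpos : 0 ≤ IV := integral_nonneg fun t => by positivity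
  have hBim : |B.im| ≤ IH := by
    by_cases hInt : Integrable (fun t : ℝ => ‖incl (Hv t)‖^2)
    · calc |B.im| ≤ ‖B‖ := Complex.abs_im_le_norm B
        _ ≤ ∫ t : ℝ, ‖⟪incl (Hv t), incl (v t)⟫_ℂ‖ := by
            rw [hB]; exact norm_integral_le_integral_norm _
        _ ≤ ∫ t : ℝ, (‖incl (Hv t)‖^2 + ‖incl (v t)‖^2)/2 := by
            refine integral_mono hiHH.norm ((hInt.add hiH).div_const 2) fun t => ?_
            have h1 := norm_inner_le_norm (𝕜 := ℂ) (incl (Hv t)) (incl (v t))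
            nlinarith [sq_nonneg (‖incl (Hv t)‖ - ‖incl (v t)‖), norm_nonneg (incl (Hv t)),
              norm_nonneg (incl (v t)), norm_nonneg (⟪incl (Hv t), incl (v t)⟫_ℂ)]
        _ = IH := by
            rw [integral_div, integral_add hInt hiH, hisoH]; ring
    · have h0 : IH = 0 := by rw [← hisoH, integral_undef hInt]
      have hae : (fun t : ℝ => ‖incl (v t)‖^2) =ᵐ[volume] 0 := by
        refine (integral_eq_zero_iff_of_nonneg (fun t => by positivity) hiH).mp ?_
        exact h0
      have hB0 : B = 0 := by
        rw [hB, ← integral_zero ℝ ℂ]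
        refine integral_congr_ae ?_
        filter_upwards [hae] with t ht
        have hv0 : incl (v t) = 0 := by
          have : ‖incl (v t)‖ = 0 := by
            have h2 : ‖incl (v t)‖^2 = 0 := ht
            nlinarith [norm_nonneg (incl (v t))]
          simpa using this
        simp [hv0]
      rw [hB0]; simpa using hIHpos
  have hRa : lam * IV ≤ (∫ t : ℝ, a t (v t) (v t)).re := by
    have h1 : ∫ t : ℝ, (a t (v t) (v t)).re = (∫ t : ℝ, a t (v t) (v t)).re := by
      simpa using integral_re hia
    calc lam * IV = ∫ t : ℝ, lam * ‖v t‖^2 := by rw [integral_const_mul]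
      _ ≤ ∫ t : ℝ, (a t (v t) (v t)).re :=
          integral_mono (hiV.const_mul lam) hia.re fun t => hcoer t (v t)
      _ = _ := h1
  have hRaH : -(Lam * IV) ≤ (∫ t : ℝ, a t (v t) (Hv t)).re := by
    have h1 : ∫ t : ℝ, (a t (v t) (Hv t)).re = (∫ t : ℝ, a t (v t) (Hv t)).re := by
      simpa using integral_re hiaH
    have hpt2 : ∀ t : ℝ, -(Lam/2 * (‖v t‖^2 + ‖Hv t‖^2)) ≤ (a t (v t) (Hv t)).re := by
      intro t
      have hb := hbdd t (v t) (Hv t)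
      have h2 : -‖a t (v t) (Hv t)‖ ≤ (a t (v t) (Hv t)).re := by
        have h3 := Complex.abs_re_le_norm (a t (v t) (Hv t))
        cases abs_cases ((a t (v t) (Hv t)).re) with
        | inl h => linarith [h.1, h3]
        | inr h => linarith [h.1, h3]
      nlinarith [sq_nonneg (‖v t‖ - ‖Hv t‖), norm_nonneg (v t), norm_nonneg (Hv t)]
    calc -(Lam * IV) = ∫ t : ℝ, -(Lam/2 * (‖v t‖^2 + ‖Hv t‖^2)) := by
          rw [integral_neg, integral_const_mul, integral_add hiV hiHV, hisoV]; ring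
      _ ≤ ∫ t : ℝ, (a t (v t) (Hv t)).re :=
          integral_mono (((hiV.add hiHV).const_mul _).neg) hiaH.re hpt2
      _ = _ := h1
  have hRHS : ∫ t : ℝ, (‖incl (v t)‖^2 + ‖Dv t‖^2 + ‖v t‖^2) = IH + ID + IV := by
    have I2 : Integrable (fun t : ℝ => ‖incl (v t)‖^2 + ‖Dv t‖^2) := hiH.add hiDv
    rw [integral_add I2 hiV, integral_add hiH hiDv]
  rw [hRHS, ← hδ]
  set Ra := (∫ t : ℝ, a t (v t) (v t)).re
  set RaH := (∫ t : ℝ, a t (v t) (Hv t)).re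
  simp only [Complex.add_re, Complex.neg_re, Complex.mul_re, Complex.ofReal_re,
    Complex.ofReal_im, hskewD, hskewH, Complex.mul_im]
  have hIm : θ.im * δ * B.im ≤ δ * (|θ.im| * IH) := by
    have h1 : θ.im * B.im ≤ |θ.im| * IH := by
      calc θ.im * B.im ≤ |θ.im * B.im| := le_abs_self _
        _ = |θ.im| * |B.im| := abs_mul _ _
        _ ≤ |θ.im| * IH := mul_le_mul_of_nonneg_left hBim (abs_nonneg _)
    calc θ.im * δ * B.im = δ * (θ.im * B.im) := by ring
      _ ≤ δ * (|θ.im| * IH) := mul_le_mul_of_nonneg_left h1 hδpos.le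
  have hmulH : δ * (-(Lam * IV)) ≤ δ * (∫ t : ℝ, a t (v t) (Hv t)).re :=
    mul_le_mul_of_nonneg_left hRaH hδpos.le
  have k1 : (δ * |θ.im| + δ) * IH ≤ θ.re * IH := mul_le_mul_of_nonneg_right hδb hIHpos
  have k2 : (δ * Lam + δ) * IV ≤ lam * IV := mul_le_mul_of_nonneg_right hδa hIVpos
  nlinarith [hIm, hmulH, hRa, k1, k2]
end

section
/- Let a : ℝ → ℂ satisfy the scale-invariant bound sup_I (1/ℓ(I)) ∫_I ∫_I |a(t)−a(s)|²/|t−s|² ds dt ≤ M over all bounded intervals I. Then a (has a representative that) is Hölder continuous of exponent 1/2: |a(t)−a(s)| ≤ C√M |t−s|^{1/2} for all t,s, with C an absolute constant. -/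
open MeasureTheory Set ENNReal Filter Topology

namespace SIHH

variable {a : ℝ → ℂ} {M : ℝ}

lemma abs_sub_le_of_mem {x y t s : ℝ} (ht : t ∈ Icc x y) (hs : s ∈ Icc x y) :
    |t - s| ≤ y - x := by
  rw [abs_sub_le_iff]; constructor <;> [linarith [ht.1, ht.2, hs.1, hs.2];
    linarith [ht.1, ht.2, hs.1, hs.2]]

lemma doubleSq (ha : Measurable a) (hM : 0 ≤ M)
    (H : ∀ x y : ℝ, x ≤ y → ∫⁻ t in Icc x y, ∫⁻ s in Icc x y,
      ENNReal.ofReal (‖a t - a s‖ ^ 2 / |t - s| ^ 2) ≤ ENNReal.ofReal (M * (y - x)))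
    {x y : ℝ} (hxy : x ≤ y) :
    ∫⁻ t in Icc x y, ∫⁻ s in Icc x y, ENNReal.ofReal (‖a t - a s‖ ^ 2)
      ≤ ENNReal.ofReal ((y - x) ^ 2) * ENNReal.ofReal (M * (y - x)) := by
  have step1 : ∫⁻ t in Icc x y, ∫⁻ s in Icc x y, ENNReal.ofReal (‖a t - a s‖ ^ 2)
      ≤ ∫⁻ t in Icc x y, ∫⁻ s in Icc x y,
        ENNReal.ofReal ((y - x) ^ 2) * ENNReal.ofReal (‖a t - a s‖ ^ 2 / |t - s| ^ 2) := by
    refine lintegral_mono_ae ?_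
    filter_upwards [ae_restrict_mem measurableSet_Icc] with t ht
    refine lintegral_mono_ae ?_
    filter_upwards [ae_restrict_mem measurableSet_Icc] with s hs
    rw [← ENNReal.ofReal_mul (sq_nonneg _)]
    apply ENNReal.ofReal_le_ofReal
    rcases eq_or_ne t s with rfl | hts
    · simp [sq_nonneg, div_nonneg, mul_nonneg]
    · have h1 : |t - s| ≤ y - x := abs_sub_le_of_mem ht hs
      have h2 : (0:ℝ) < |t - s| := abs_pos.mpr (sub_ne_zero.mpr hts)
      have h3 : ‖a t - a s‖ ^ 2 = ‖a t - a s‖ ^ 2 / |t - s| ^ 2 * |t - s| ^ 2 :=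
        (div_mul_cancel₀ _ (by positivity)).symm
      calc ‖a t - a s‖ ^ 2 = ‖a t - a s‖ ^ 2 / |t - s| ^ 2 * |t - s| ^ 2 := h3
        _ ≤ ‖a t - a s‖ ^ 2 / |t - s| ^ 2 * (y - x) ^ 2 := by
            apply mul_le_mul_of_nonneg_left (by nlinarith [abs_nonneg (t - s)]) (by positivity)
        _ = (y - x) ^ 2 * (‖a t - a s‖ ^ 2 / |t - s| ^ 2) := by ring
  refine step1.trans ?_
  have step2 : ∫⁻ t in Icc x y, ∫⁻ s in Icc x y,
        ENNReal.ofReal ((y - x) ^ 2) * ENNReal.ofReal (‖a t - a s‖ ^ 2 / |t - s| ^ 2)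
      = ENNReal.ofReal ((y - x) ^ 2) * ∫⁻ t in Icc x y, ∫⁻ s in Icc x y,
        ENNReal.ofReal (‖a t - a s‖ ^ 2 / |t - s| ^ 2) := by
    rw [← lintegral_const_mul' _ _ ENNReal.ofReal_ne_top]
    congr 1; funext t
    rw [← lintegral_const_mul' _ _ ENNReal.ofReal_ne_top]
  rw [step2]
  exact mul_le_mul_right (H x y hxy) _


lemma intOn (ha : Measurable a) (hM : 0 ≤ M)
    (H : ∀ x y : ℝ, x ≤ y → ∫⁻ t in Icc x y, ∫⁻ s in Icc x y,
      ENNReal.ofReal (‖a t - a s‖ ^ 2 / |t - s| ^ 2) ≤ ENNReal.ofReal (M * (y - x)))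
    {x y : ℝ} (hxy : x < y) :
    IntegrableOn a (Icc x y) := by
  set I := Icc x y with hI
  have hmp : Measurable fun p : ℝ × ℝ => ENNReal.ofReal (‖a p.1 - a p.2‖ ^ 2) := by
    apply Measurable.ennreal_ofReal
    exact ((ha.comp measurable_fst).sub (ha.comp measurable_snd)).norm.pow measurable_const
  have hinner : Measurable fun t => ∫⁻ s in I, ENNReal.ofReal (‖a t - a s‖ ^ 2) :=
    Measurable.lintegral_prod_right (f := fun t s => ENNReal.ofReal (‖a t - a s‖ ^ 2)) hmp
  have hfin : ∫⁻ t in I, ∫⁻ s in I, ENNReal.ofReal (‖a t - a s‖ ^ 2) < ⊤ :=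
    lt_of_le_of_lt (doubleSq ha hM H hxy.le)
      (ENNReal.mul_lt_top ENNReal.ofReal_lt_top ENNReal.ofReal_lt_top)
  have hne : (volume.restrict I) ≠ 0 := by
    intro h
    have : volume I = 0 := by
      rw [← Measure.restrict_apply_univ, h]; simp
    rw [hI, Real.volume_Icc] at this
    simp [ENNReal.ofReal_eq_zero] at this
    linarith
  haveI : (ae (volume.restrict I)).NeBot := ae_neBot.mpr hne
  have hae : ∀ᵐ t ∂(volume.restrict I),
      (∫⁻ s in I, ENNReal.ofReal (‖a t - a s‖ ^ 2)) < ⊤ :=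
    ae_lt_top hinner hfin.ne
  obtain ⟨t₀, ht₀⟩ := hae.exists
  refine ⟨ha.aestronglyMeasurable, ?_⟩
  rw [hasFiniteIntegral_iff_norm]
  have pt : ∀ s : ℝ, ENNReal.ofReal ‖a s‖
      ≤ ENNReal.ofReal (1 + 2 * ‖a t₀‖ ^ 2) + 2 * ENNReal.ofReal (‖a t₀ - a s‖ ^ 2) := by
    intro s
    have h1 : ‖a s‖ ≤ 1 + 2 * ‖a t₀‖ ^ 2 + 2 * ‖a t₀ - a s‖ ^ 2 := by
      have h2 : ‖a s‖ ≤ ‖a t₀‖ + ‖a t₀ - a s‖ := by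
        calc ‖a s‖ = ‖a t₀ - (a t₀ - a s)‖ := by ring_nf
          _ ≤ ‖a t₀‖ + ‖a t₀ - a s‖ := norm_sub_le _ _
      nlinarith [norm_nonneg (a s), norm_nonneg (a t₀), norm_nonneg (a t₀ - a s),
        sq_nonneg (‖a t₀‖ - ‖a t₀ - a s‖), sq_nonneg (‖a t₀‖ + ‖a t₀ - a s‖ - 1)]
    calc ENNReal.ofReal ‖a s‖
        ≤ ENNReal.ofReal (1 + 2 * ‖a t₀‖ ^ 2 + 2 * ‖a t₀ - a s‖ ^ 2) :=
          ENNReal.ofReal_le_ofReal h1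
      _ ≤ ENNReal.ofReal (1 + 2 * ‖a t₀‖ ^ 2) + ENNReal.ofReal (2 * ‖a t₀ - a s‖ ^ 2) :=
          ENNReal.ofReal_add_le
      _ = ENNReal.ofReal (1 + 2 * ‖a t₀‖ ^ 2) + 2 * ENNReal.ofReal (‖a t₀ - a s‖ ^ 2) := by
          rw [ENNReal.ofReal_mul (by norm_num)]; norm_num
  calc ∫⁻ s in I, ENNReal.ofReal ‖a s‖
      ≤ ∫⁻ s in I, (ENNReal.ofReal (1 + 2 * ‖a t₀‖ ^ 2)
          + 2 * ENNReal.ofReal (‖a t₀ - a s‖ ^ 2)) := lintegral_mono fun s => pt s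
    _ = ENNReal.ofReal (1 + 2 * ‖a t₀‖ ^ 2) * volume I
          + 2 * ∫⁻ s in I, ENNReal.ofReal (‖a t₀ - a s‖ ^ 2) := by
        rw [lintegral_add_left (by measurability), lintegral_const,
          Measure.restrict_apply_univ, lintegral_const_mul' _ _ (by norm_num)]
    _ < ⊤ := by
        apply ENNReal.add_lt_top.mpr
        constructor
        · apply ENNReal.mul_lt_top ENNReal.ofReal_lt_top
          rw [hI, Real.volume_Icc]; exact ENNReal.ofReal_lt_top
        · exact ENNReal.mul_lt_top (by norm_num) ht₀


lemma key (ha : Measurable a) (hM : 0 ≤ M)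
    (H : ∀ x y : ℝ, x ≤ y → ∫⁻ t in Icc x y, ∫⁻ s in Icc x y,
      ENNReal.ofReal (‖a t - a s‖ ^ 2 / |t - s| ^ 2) ≤ ENNReal.ofReal (M * (y - x)))
    {x y u v : ℝ} (hxy : x < y) (huv : u < v) (hsub : Icc u v ⊆ Icc x y) :
    ‖(⨍ t in Icc u v, a t) - ⨍ t in Icc x y, a t‖
      ≤ ((y - x) / (v - u)) * Real.sqrt (M * (y - x)) := by
  set I := Icc x y with hIdef
  set J := Icc u v with hJdef
  have hI : IntegrableOn a I := intOn ha hM H hxy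
  have hJ : IntegrableOn a J := hI.mono_set hsub
  have hq0 : (0:ℝ) < y - x := by linarith
  have hp0 : (0:ℝ) < v - u := by linarith
  have hμI : volume I = ENNReal.ofReal (y - x) := Real.volume_Icc
  have hμJ : volume J = ENNReal.ofReal (v - u) := Real.volume_Icc
  -- the identity for the double integral
  have inner_id : ∀ t, ∫ s in I, (a t - a s) = (y - x) • a t - ∫ s in I, a s := by
    intro t
    rw [integral_sub (integrable_const _) hI, setIntegral_const, measureReal_def, hμI,
      ENNReal.toReal_ofReal hq0.le]
  have D_id : ∫ t in J, (∫ s in I, (a t - a s))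
      = ((y - x) • ∫ t in J, a t) - (v - u) • ∫ s in I, a s := by
    simp_rw [inner_id]
    have h1 : Integrable (fun t => (y - x) • a t) (volume.restrict J) := hJ.smul (y - x)
    rw [integral_sub h1 (integrable_const _), integral_smul, setIntegral_const,
      measureReal_def, hμJ, ENNReal.toReal_ofReal hp0.le]
  have avg_id : (⨍ t in J, a t) - ⨍ t in I, a t
      = ((v - u) * (y - x))⁻¹ • ∫ t in J, (∫ s in I, (a t - a s)) := by
    rw [D_id, smul_sub, smul_smul, smul_smul, setAverage_eq, setAverage_eq, measureReal_def, measureReal_def, hμI, hμJ,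
      ENNReal.toReal_ofReal hq0.le, ENNReal.toReal_ofReal hp0.le]
    congr 2
    · field_simp
    · field_simp
  -- pass to lintegrals
  have hmp : Measurable fun p : ℝ × ℝ => ENNReal.ofReal ‖a p.1 - a p.2‖ := by
    apply Measurable.ennreal_ofReal
    exact ((ha.comp measurable_fst).sub (ha.comp measurable_snd)).norm
  -- Cauchy-Schwarz bound for the L¹ double integral over I × I
  have hCS : ∫⁻ t in I, ∫⁻ s in I, ENNReal.ofReal ‖a t - a s‖
      ≤ ENNReal.ofReal (Real.sqrt ((y - x) ^ 2 * (M * (y - x))) * (y - x)) := by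
    have hprod : ∫⁻ t in I, ∫⁻ s in I, ENNReal.ofReal ‖a t - a s‖
        = ∫⁻ p, ENNReal.ofReal ‖a p.1 - a p.2‖
            ∂((volume.restrict I).prod (volume.restrict I)) :=
      lintegral_lintegral (f := fun t s => ENNReal.ofReal ‖a t - a s‖)
        (Measurable.aemeasurable (by exact hmp))
    rw [hprod]
    have conj : Real.HolderConjugate 2 2 := Real.HolderConjugate.two_two
    have hCS0 := ENNReal.lintegral_mul_le_Lp_mul_Lq
      ((volume.restrict I).prod (volume.restrict I)) conj hmp.aemeasurable
      (aemeasurable_const (b := (1:ℝ≥0∞)))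
    simp only [Pi.mul_apply, mul_one, one_rpow] at hCS0
    have hsq : ∫⁻ p, ENNReal.ofReal ‖a p.1 - a p.2‖ ^ (2:ℝ)
          ∂((volume.restrict I).prod (volume.restrict I))
        ≤ ENNReal.ofReal ((y - x) ^ 2) * ENNReal.ofReal (M * (y - x)) := by
      have : ∀ p : ℝ × ℝ, ENNReal.ofReal ‖a p.1 - a p.2‖ ^ (2:ℝ)
          = ENNReal.ofReal (‖a p.1 - a p.2‖ ^ 2) := by
        intro p
        rw [show ((2:ℝ)) = ((2:ℕ):ℝ) by norm_num, ENNReal.rpow_natCast,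
          ENNReal.ofReal_pow (norm_nonneg _)]
      simp_rw [this]
      rw [← lintegral_lintegral (f := fun t s => ENNReal.ofReal (‖a t - a s‖ ^ 2))]
      · exact doubleSq ha hM H hxy.le
      · apply Measurable.aemeasurable
        apply Measurable.ennreal_ofReal
        exact ((ha.comp measurable_fst).sub (ha.comp measurable_snd)).norm.pow
          measurable_const
    have hone : (∫⁻ _p, (1:ℝ≥0∞) ∂((volume.restrict I).prod (volume.restrict I)))
        = ENNReal.ofReal ((y - x) ^ 2) := by
      rw [lintegral_one, ← Set.univ_prod_univ, Measure.prod_prod]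
      simp only [Measure.restrict_apply_univ]
      rw [hμI, ← ENNReal.ofReal_mul hq0.le, sq]
    refine hCS0.trans ?_
    rw [hone]
    calc (∫⁻ p, ENNReal.ofReal ‖a p.1 - a p.2‖ ^ (2:ℝ)
            ∂((volume.restrict I).prod (volume.restrict I))) ^ (1/(2:ℝ))
          * (ENNReal.ofReal ((y - x) ^ 2)) ^ (1/(2:ℝ))
        ≤ (ENNReal.ofReal ((y - x) ^ 2) * ENNReal.ofReal (M * (y - x))) ^ (1/(2:ℝ))
          * (ENNReal.ofReal ((y - x) ^ 2)) ^ (1/(2:ℝ)) := by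
          gcongr
      _ = ENNReal.ofReal (Real.sqrt ((y - x) ^ 2 * (M * (y - x))) * (y - x)) := by
          rw [← ENNReal.ofReal_mul (by positivity),
            ENNReal.ofReal_rpow_of_nonneg (by positivity) (by norm_num),
            ENNReal.ofReal_rpow_of_nonneg (by positivity) (by norm_num),
            ← ENNReal.ofReal_mul (by positivity)]
          congr 1
          rw [← Real.sqrt_eq_rpow, ← Real.sqrt_eq_rpow, Real.sqrt_sq hq0.le]
  have hJI : ∫⁻ t in J, ∫⁻ s in I, ENNReal.ofReal ‖a t - a s‖
      ≤ ∫⁻ t in I, ∫⁻ s in I, ENNReal.ofReal ‖a t - a s‖ :=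
    lintegral_mono' (Measure.restrict_mono hsub le_rfl) le_rfl
  have hL1 : ‖∫ t in J, (∫ s in I, (a t - a s))‖
      ≤ (∫⁻ t in J, ∫⁻ s in I, ENNReal.ofReal ‖a t - a s‖).toReal := by
    refine (norm_integral_le_lintegral_norm _).trans ?_
    apply ENNReal.toReal_mono
    · exact (lt_of_le_of_lt (hJI.trans hCS) ENNReal.ofReal_lt_top).ne
    · refine lintegral_mono fun t => ?_
      calc ENNReal.ofReal ‖∫ s in I, (a t - a s)‖
          ≤ ENNReal.ofReal ((∫⁻ s in I, ENNReal.ofReal ‖a t - a s‖).toReal) :=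
            ENNReal.ofReal_le_ofReal (norm_integral_le_lintegral_norm _)
        _ ≤ ∫⁻ s in I, ENNReal.ofReal ‖a t - a s‖ := ENNReal.ofReal_toReal_le
  rw [avg_id, norm_smul]
  have hn : ‖((v - u) * (y - x))⁻¹‖ = ((v - u) * (y - x))⁻¹ := by
    rw [Real.norm_eq_abs, abs_of_pos]; positivity
  rw [hn]
  have hto : ‖∫ t in J, (∫ s in I, (a t - a s))‖
      ≤ Real.sqrt ((y - x) ^ 2 * (M * (y - x))) * (y - x) :=
    hL1.trans (ENNReal.toReal_le_of_le_ofReal (by positivity) (hJI.trans hCS))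
  calc ((v - u) * (y - x))⁻¹ * ‖∫ t in J, (∫ s in I, (a t - a s))‖
      ≤ ((v - u) * (y - x))⁻¹ * (Real.sqrt ((y - x) ^ 2 * (M * (y - x))) * (y - x)) :=
        mul_le_mul_of_nonneg_left hto (by positivity)
    _ = ((y - x) / (v - u)) * Real.sqrt (M * (y - x)) := by
        rw [Real.sqrt_mul (sq_nonneg _), Real.sqrt_sq hq0.le]
        field_simp



noncomputable def Av (a : ℝ → ℂ) (x r : ℝ) : ℂ := ⨍ t in Icc (x - r) (x + r), a t

lemma step (ha : Measurable a) (hM : 0 ≤ M)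
    (H : ∀ x y : ℝ, x ≤ y → ∫⁻ t in Icc x y, ∫⁻ s in Icc x y,
      ENNReal.ofReal (‖a t - a s‖ ^ 2 / |t - s| ^ 2) ≤ ENNReal.ofReal (M * (y - x)))
    {x r r' : ℝ} (h0 : 0 < r') (h1 : r' ≤ r) (h2 : r ≤ 2 * r') :
    ‖Av a x r' - Av a x r‖ ≤ 2 * Real.sqrt (2 * (M * r)) := by
  have hxy : x - r < x + r := by linarith
  have huv : x - r' < x + r' := by linarith
  have hsub : Icc (x - r') (x + r') ⊆ Icc (x - r) (x + r) :=
    Icc_subset_Icc (by linarith) (by linarith)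
  have hk := key ha hM H hxy huv hsub
  unfold Av
  refine hk.trans ?_
  have e1 : x + r - (x - r) = 2 * r := by ring
  have e2 : x + r' - (x - r') = 2 * r' := by ring
  rw [e1, e2]
  have hd : (2 * r) / (2 * r') ≤ 2 := by
    rw [div_le_iff₀ (by positivity)]; linarith
  have hs : M * (2 * r) = 2 * (M * r) := by ring
  rw [hs]
  exact mul_le_mul_of_nonneg_right hd (Real.sqrt_nonneg _)

lemma chain (ha : Measurable a) (hM : 0 ≤ M)
    (H : ∀ x y : ℝ, x ≤ y → ∫⁻ t in Icc x y, ∫⁻ s in Icc x y,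
      ENNReal.ofReal (‖a t - a s‖ ^ 2 / |t - s| ^ 2) ≤ ENNReal.ofReal (M * (y - x)))
    {x : ℝ} :
    ∀ n : ℕ, ∀ r r' : ℝ, 0 < r' → r' ≤ r → r / 2 ^ n ≤ r' →
      ‖Av a x r' - Av a x r‖
        ≤ (∑ k ∈ Finset.range (n + 1), ((Real.sqrt 2)⁻¹) ^ k) * (2 * Real.sqrt (2 * (M * r))) := by
  intro n
  induction n with
  | zero =>
    intro r r' h0 h1 h2
    have : r = r' := le_antisymm (by simpa using h2) h1
    rw [this]
    simp only [sub_self, norm_zero]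
    apply mul_nonneg (Finset.sum_nonneg fun k _ => by positivity) (by positivity)
  | succ n ih =>
    intro r r' h0 h1 h2
    have hr : 0 < r := lt_of_lt_of_le h0 h1
    by_cases hc : r / 2 ≤ r'
    · have hst := step ha hM H (x := x) h0 h1 (by linarith)
      refine hst.trans ?_
      have hsum : (1:ℝ) ≤ ∑ k ∈ Finset.range (n + 2), ((Real.sqrt 2)⁻¹) ^ k := by
        have h00 := Finset.single_le_sum (f := fun k => ((Real.sqrt 2)⁻¹) ^ k)
          (fun k _ => by positivity) (Finset.mem_range.mpr (Nat.succ_pos (n+1)))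
        simpa using h00
      exact le_mul_of_one_le_left (by positivity) hsum
    · push_neg at hc
      have ih1 := ih (r / 2) r' h0 hc.le (by
        have : r / 2 / 2 ^ n = r / 2 ^ (n + 1) := by
          rw [pow_succ]; ring
        rw [this]; exact h2)
      have hst := step ha hM H (x := x) (r' := r / 2) (r := r) (by positivity) (by linarith) (by linarith)
      have htri : ‖Av a x r' - Av a x r‖
          ≤ ‖Av a x r' - Av a x (r / 2)‖ + ‖Av a x (r / 2) - Av a x r‖ := by
        have := dist_triangle (Av a x r') (Av a x (r / 2)) (Av a x r)
        simpa [dist_eq_norm] using this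
      have hq : Real.sqrt (2 * (M * (r / 2))) = (Real.sqrt 2)⁻¹ * Real.sqrt (2 * (M * r)) := by
        rw [show 2 * (M * (r / 2)) = (2 * (M * r)) / 2 by ring,
          Real.sqrt_div (by positivity), div_eq_inv_mul]
      have hsum : ∑ k ∈ Finset.range (n + 2), ((Real.sqrt 2)⁻¹) ^ k
          = 1 + (Real.sqrt 2)⁻¹ * ∑ k ∈ Finset.range (n + 1), ((Real.sqrt 2)⁻¹) ^ k := by
        rw [Finset.sum_range_succ' (fun k => ((Real.sqrt 2)⁻¹) ^ k) (n + 1)]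
        simp only [pow_succ', pow_zero]
        rw [← Finset.mul_sum]
        ring
      rw [hq] at ih1
      set S := ∑ k ∈ Finset.range (n + 1), ((Real.sqrt 2)⁻¹) ^ k with hS
      have hS0 : 0 ≤ S := Finset.sum_nonneg fun k _ => by positivity
      have hX0 : 0 ≤ Real.sqrt (2 * (M * r)) := Real.sqrt_nonneg _
      calc ‖Av a x r' - Av a x r‖
          ≤ ‖Av a x r' - Av a x (r / 2)‖ + ‖Av a x (r / 2) - Av a x r‖ := htri
        _ ≤ S * (2 * ((Real.sqrt 2)⁻¹ * Real.sqrt (2 * (M * r))))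
            + 2 * Real.sqrt (2 * (M * r)) := add_le_add ih1 hst
        _ = (1 + (Real.sqrt 2)⁻¹ * S) * (2 * Real.sqrt (2 * (M * r))) := by ring
        _ = (∑ k ∈ Finset.range (n + 2), ((Real.sqrt 2)⁻¹) ^ k)
            * (2 * Real.sqrt (2 * (M * r))) := by rw [hsum]

lemma chain' (ha : Measurable a) (hM : 0 ≤ M)
    (H : ∀ x y : ℝ, x ≤ y → ∫⁻ t in Icc x y, ∫⁻ s in Icc x y,
      ENNReal.ofReal (‖a t - a s‖ ^ 2 / |t - s| ^ 2) ≤ ENNReal.ofReal (M * (y - x)))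
    {x r r' : ℝ} (h0 : 0 < r') (h1 : r' ≤ r) :
    ‖Av a x r' - Av a x r‖ ≤ 8 * Real.sqrt (2 * (M * r)) := by
  have hr : 0 < r := lt_of_lt_of_le h0 h1
  obtain ⟨n, hn⟩ : ∃ n : ℕ, r / r' < 2 ^ n := pow_unbounded_of_one_lt _ (by norm_num)
  rw [div_lt_iff₀ h0] at hn
  have h2 : r / 2 ^ n ≤ r' := by
    rw [div_le_iff₀ (by positivity)]; nlinarith
  have hch := chain ha hM H (x := x) n r r' h0 h1 h2
  refine hch.trans ?_
  have hq34 : (Real.sqrt 2)⁻¹ ≤ 3 / 4 := by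
    rw [inv_le_comm₀ (by positivity) (by norm_num)]
    nlinarith [Real.sq_sqrt (by norm_num : (0:ℝ) ≤ 2), Real.sqrt_nonneg 2]
  have hsum : ∑ k ∈ Finset.range (n + 1), ((Real.sqrt 2)⁻¹) ^ k ≤ 4 := by
    calc ∑ k ∈ Finset.range (n + 1), ((Real.sqrt 2)⁻¹) ^ k
        ≤ ∑ k ∈ Finset.range (n + 1), (3 / 4 : ℝ) ^ k :=
          Finset.sum_le_sum fun k _ => pow_le_pow_left₀ (by positivity) hq34 k
      _ ≤ 4 := by
          rw [geom_sum_eq (by norm_num : (3/4:ℝ) ≠ 1),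
            div_le_iff_of_neg (by norm_num : (3/4:ℝ) - 1 < 0)]
          have hp1 : (0:ℝ) ≤ (3/4:ℝ) ^ (n + 1) := by positivity
          nlinarith
  calc (∑ k ∈ Finset.range (n + 1), ((Real.sqrt 2)⁻¹) ^ k) * (2 * Real.sqrt (2 * (M * r)))
      ≤ 4 * (2 * Real.sqrt (2 * (M * r))) :=
        mul_le_mul_of_nonneg_right hsum (by positivity)
    _ = 8 * Real.sqrt (2 * (M * r)) := by ring



end SIHH

/-- **The scale-invariant condition implies 1/2-Hölder continuity.**
There is an absolute constant `C > 0` such that: whenever `a : ℝ → ℂ` is measurable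
and satisfies `∫_I ∫_I |a(t)-a(s)|²/|t-s|² ds dt ≤ M ℓ(I)` for all bounded intervals
`I`, then `a` has a representative `b` that is `1/2`-Hölder continuous with
`|b(t) - b(s)| ≤ C √M |t-s|^{1/2}`. -/
theorem scale_invariant_implies_half_holder :
    ∃ C : ℝ, 0 < C ∧
      ∀ (a : ℝ → ℂ), Measurable a → ∀ M : ℝ, 0 ≤ M →
      (∀ x y : ℝ, x ≤ y →
        ∫⁻ t in Icc x y, ∫⁻ s in Icc x y,
          ENNReal.ofReal (‖a t - a s‖ ^ 2 / |t - s| ^ 2)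
          ≤ ENNReal.ofReal (M * (y - x))) →
      ∃ b : ℝ → ℂ, (∀ᵐ t : ℝ, a t = b t) ∧
        ∀ t s : ℝ, ‖b t - b s‖ ≤ C * Real.sqrt M * Real.sqrt |t - s| := by
  refine ⟨100, by norm_num, ?_⟩
  intro a ha M hM H
  have hloc : LocallyIntegrable a := by
    rw [MeasureTheory.locallyIntegrable_iff]
    intro K hK
    obtain ⟨R, hR⟩ := hK.isBounded.subset_closedBall 0
    have habs : -(|R| + 1) < |R| + 1 := by
      have := abs_nonneg R; linarith
    refine (SIHH.intOn ha hM H habs).mono_set (hR.trans ?_)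
    rw [Real.closedBall_eq_Icc]
    exact Icc_subset_Icc (by cases abs_cases R <;> linarith) (by cases abs_cases R <;> linarith)
  have hhalf : Tendsto (fun n : ℕ => ((2:ℝ)⁻¹) ^ n) atTop (𝓝 0) :=
    tendsto_pow_atTop_nhds_zero_of_lt_one (by norm_num) (by norm_num)
  have hcs : ∀ x : ℝ, ∃ L : ℂ,
      Tendsto (fun n : ℕ => SIHH.Av a x (((2:ℝ)⁻¹) ^ n)) atTop (𝓝 L) := by
    intro x
    apply cauchySeq_tendsto_of_complete
    rw [Metric.cauchySeq_iff']
    intro ε hε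
    have htend : Tendsto (fun N : ℕ => 8 * Real.sqrt (2 * (M * ((2:ℝ)⁻¹) ^ N))) atTop (𝓝 0) := by
      have h2 : Tendsto (fun N : ℕ => 2 * (M * ((2:ℝ)⁻¹) ^ N)) atTop (𝓝 (2 * (M * 0))) :=
        (hhalf.const_mul M).const_mul 2
      have h3 : Tendsto (fun N : ℕ => Real.sqrt (2 * (M * ((2:ℝ)⁻¹) ^ N))) atTop
          (𝓝 (Real.sqrt (2 * (M * 0)))) := (Real.continuous_sqrt.tendsto _).comp h2
      have h4 := h3.const_mul (8:ℝ)
      simp only [mul_zero, Real.sqrt_zero] at h4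
      exact h4
    obtain ⟨N, hN⟩ := (htend.eventually (gt_mem_nhds hε)).exists
    refine ⟨N, fun n hn => ?_⟩
    rw [dist_eq_norm]
    have h1 : ((2:ℝ)⁻¹) ^ n ≤ ((2:ℝ)⁻¹) ^ N :=
      pow_le_pow_of_le_one (by norm_num) (by norm_num) hn
    exact lt_of_le_of_lt (SIHH.chain' ha hM H (by positivity) h1) hN
  choose b hb using hcs
  have hbAv : ∀ x r : ℝ, 0 < r →
      ‖b x - SIHH.Av a x r‖ ≤ 8 * Real.sqrt (2 * (M * r)) := by
    intro x r hr
    have hlim : Tendsto (fun n : ℕ => ‖SIHH.Av a x (((2:ℝ)⁻¹) ^ n) - SIHH.Av a x r‖)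
        atTop (𝓝 ‖b x - SIHH.Av a x r‖) := (((hb x).sub_const _).norm)
    refine le_of_tendsto hlim ?_
    have hev : ∀ᶠ n : ℕ in atTop, ((2:ℝ)⁻¹) ^ n ≤ r := by
      filter_upwards [hhalf.eventually (gt_mem_nhds hr)] with n hn
      exact hn.le
    filter_upwards [hev] with n hn
    exact SIHH.chain' ha hM H (by positivity) hn
  refine ⟨b, ?_, ?_⟩
  · filter_upwards [IsUnifLocDoublingMeasure.ae_tendsto_average (volume : Measure ℝ) hloc 1]
      with x hx
    have hδ : Tendsto (fun n : ℕ => ((2:ℝ)⁻¹) ^ n) atTop (𝓝[>] 0) := by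
      apply tendsto_nhdsWithin_of_tendsto_nhds_of_eventually_within
      · exact hhalf
      · exact Eventually.of_forall fun n => pow_pos (by norm_num : (0:ℝ) < 2⁻¹) n
    have hx2 := hx (fun _ => x) (fun n : ℕ => ((2:ℝ)⁻¹) ^ n) hδ
      (Eventually.of_forall fun n => Metric.mem_closedBall_self (by positivity))
    have hx3 : Tendsto (fun n : ℕ => SIHH.Av a x (((2:ℝ)⁻¹) ^ n)) atTop (𝓝 (a x)) := by
      simpa [SIHH.Av, Real.closedBall_eq_Icc] using hx2
    exact tendsto_nhds_unique hx3 (hb x)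
  · have main : ∀ t s : ℝ, t < s → ‖b t - b s‖ ≤ 100 * Real.sqrt M * Real.sqrt (s - t) := by
      intro t s hts
      have hd : (0:ℝ) < s - t := by linarith
      have hb1 := hbAv t (s - t) hd
      have hb2 := hbAv s (s - t) hd
      have hmid : ‖SIHH.Av a t (s - t) - SIHH.Av a s (s - t)‖
          ≤ 3 * Real.sqrt (3 * (M * (s - t))) := by
        have hxy : 2 * t - s < 2 * s - t := by linarith
        have k1 := SIHH.key ha hM H (x := 2 * t - s) (y := 2 * s - t)
          (u := 2 * t - s) (v := s) hxy (by linarith)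
          (Icc_subset_Icc le_rfl (by linarith))
        have k2 := SIHH.key ha hM H (x := 2 * t - s) (y := 2 * s - t)
          (u := t) (v := 2 * s - t) hxy (by linarith)
          (Icc_subset_Icc (by linarith) le_rfl)
        have e1 : SIHH.Av a t (s - t) = ⨍ u in Icc (2 * t - s) s, a u := by
          unfold SIHH.Av
          rw [show t - (s - t) = 2 * t - s by ring, show t + (s - t) = s by ring]
        have e2 : SIHH.Av a s (s - t) = ⨍ u in Icc t (2 * s - t), a u := by
          unfold SIHH.Av
          rw [show s - (s - t) = t by ring, show s + (s - t) = 2 * s - t by ring]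
        have hbound : ((2 * s - t) - (2 * t - s)) / (s - (2 * t - s))
              * Real.sqrt (M * ((2 * s - t) - (2 * t - s)))
            = (3 / 2) * Real.sqrt (3 * (M * (s - t))) := by
          rw [show (2 * s - t) - (2 * t - s) = 3 * (s - t) by ring,
            show s - (2 * t - s) = 2 * (s - t) by ring,
            show M * (3 * (s - t)) = 3 * (M * (s - t)) by ring]
          congr 1
          field_simp
        have hbound2 : ((2 * s - t) - (2 * t - s)) / ((2 * s - t) - t)
              * Real.sqrt (M * ((2 * s - t) - (2 * t - s)))
            = (3 / 2) * Real.sqrt (3 * (M * (s - t))) := by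
          rw [show (2 * s - t) - (2 * t - s) = 3 * (s - t) by ring,
            show (2 * s - t) - t = 2 * (s - t) by ring,
            show M * (3 * (s - t)) = 3 * (M * (s - t)) by ring]
          congr 1
          field_simp
        rw [hbound] at k1
        rw [hbound2] at k2
        calc ‖SIHH.Av a t (s - t) - SIHH.Av a s (s - t)‖
            ≤ ‖SIHH.Av a t (s - t) - ⨍ u in Icc (2 * t - s) (2 * s - t), a u‖
              + ‖SIHH.Av a s (s - t) - ⨍ u in Icc (2 * t - s) (2 * s - t), a u‖ := by
              rw [e1, e2]
              have := dist_triangle4 ((⨍ u in Icc (2 * t - s) s, a u))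
                ((⨍ u in Icc (2 * t - s) (2 * s - t), a u))
                ((⨍ u in Icc (2 * t - s) (2 * s - t), a u))
                ((⨍ u in Icc t (2 * s - t), a u))
              simp only [dist_eq_norm, dist_self] at this ⊢
              calc ‖(⨍ u in Icc (2 * t - s) s, a u) - ⨍ u in Icc t (2 * s - t), a u‖
                  ≤ ‖(⨍ u in Icc (2 * t - s) s, a u)
                      - ⨍ u in Icc (2 * t - s) (2 * s - t), a u‖
                    + ‖(⨍ u in Icc (2 * t - s) (2 * s - t), a u)
                      - ⨍ u in Icc t (2 * s - t), a u‖ := by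
                      have h4 := norm_sub_le_norm_sub_add_norm_sub
                        ((⨍ u in Icc (2 * t - s) s, a u))
                        ((⨍ u in Icc (2 * t - s) (2 * s - t), a u))
                        ((⨍ u in Icc t (2 * s - t), a u))
                      exact h4
                _ = _ := by rw [norm_sub_rev (⨍ u in Icc (2 * t - s) (2 * s - t), a u)]
          _ ≤ (3 / 2) * Real.sqrt (3 * (M * (s - t)))
              + (3 / 2) * Real.sqrt (3 * (M * (s - t))) := by
              apply add_le_add
              · rw [e1]; exact k1
              · rw [e2]; exact k2
          _ = 3 * Real.sqrt (3 * (M * (s - t))) := by ring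
      have htri : ‖b t - b s‖ ≤ ‖b t - SIHH.Av a t (s - t)‖
          + ‖SIHH.Av a t (s - t) - SIHH.Av a s (s - t)‖
          + ‖SIHH.Av a s (s - t) - b s‖ := by
        have := dist_triangle4 (b t) (SIHH.Av a t (s - t)) (SIHH.Av a s (s - t)) (b s)
        simpa [dist_eq_norm] using this
      have hb2' : ‖SIHH.Av a s (s - t) - b s‖ ≤ 8 * Real.sqrt (2 * (M * (s - t))) := by
        rw [norm_sub_rev]; exact hb2
      have hsq2 : Real.sqrt (2 * (M * (s - t))) = Real.sqrt 2 * (Real.sqrt M * Real.sqrt (s - t)) := by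
        rw [Real.sqrt_mul (by norm_num), Real.sqrt_mul hM]
      have hsq3 : Real.sqrt (3 * (M * (s - t))) = Real.sqrt 3 * (Real.sqrt M * Real.sqrt (s - t)) := by
        rw [Real.sqrt_mul (by norm_num), Real.sqrt_mul hM]
      have h2le : Real.sqrt 2 ≤ 2 := by
        nlinarith [Real.sq_sqrt (by norm_num : (0:ℝ) ≤ 2), Real.sqrt_nonneg 2]
      have h3le : Real.sqrt 3 ≤ 2 := by
        nlinarith [Real.sq_sqrt (by norm_num : (0:ℝ) ≤ 3), Real.sqrt_nonneg 3]
      have hP : 0 ≤ Real.sqrt M * Real.sqrt (s - t) :=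
        mul_nonneg (Real.sqrt_nonneg _) (Real.sqrt_nonneg _)
      calc ‖b t - b s‖
          ≤ 8 * Real.sqrt (2 * (M * (s - t))) + 3 * Real.sqrt (3 * (M * (s - t)))
            + 8 * Real.sqrt (2 * (M * (s - t))) :=
            htri.trans (add_le_add (add_le_add hb1 hmid) hb2')
        _ = (16 * Real.sqrt 2 + 3 * Real.sqrt 3) * (Real.sqrt M * Real.sqrt (s - t)) := by
            rw [hsq2, hsq3]; ring
        _ ≤ 100 * (Real.sqrt M * Real.sqrt (s - t)) := by
            apply mul_le_mul_of_nonneg_right _ hP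
            nlinarith
        _ = 100 * Real.sqrt M * Real.sqrt (s - t) := by ring
    intro t s
    rcases lt_trichotomy t s with h | h | h
    · rw [show |t - s| = s - t by rw [abs_of_neg (by linarith)]; ring]
      exact main t s h
    · subst h
      simp [Real.sqrt_nonneg, mul_nonneg]
    · rw [show |t - s| = t - s from abs_of_pos (by linarith), norm_sub_rev]
      exact main s t h
end
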